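/- Let G be a graph with two non-adjacent vertices v and w such that the neighborhood of v is contained in the neighborhood of w. Then f(G) = f(G - w). -/

import Mathlib

open Finset

/- `f(G) = Σ_C (-1)^{|C|}` over all independent vertex sets `C` of `G`. -/
open Classical in
noncomputable def fgraph {V : Type*} [Fintype V] (G : SimpleGraph V) : ℤ :=
  ∑ s ∈ Finset.univ.filter (fun s : Finset V => ∀ u ∈ s, ∀ v ∈ s, ¬ G.Adj u v),
    (-1 : ℤ) ^ s.card

/- `f` of the induced subgraph of `G` on the vertex set `A`. -/
open Classical in
noncomputable def fdel {V : Type*} [Fintype V] (G : SimpleGraph V) (A : Set V) : ℤ :=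
  fgraph (G.induce A)

/-- Law of duplication: if `v ≠ w` are non-adjacent and `N(v) ⊆ N(w)` then
`f(G) = f(G - w)`. -/
theorem law_of_duplication {V : Type*} [Fintype V] (G : SimpleGraph V) (v w : V)
    (hne : v ≠ w) (hnadj : ¬ G.Adj v w) (hsub : ∀ u, G.Adj v u → G.Adj w u) :
    fgraph G = fdel G {u | u ≠ w} := by
  classical
  set A : Set V := {u | u ≠ w} with hA
  unfold fgraph fdel fgraph
  set P : Finset (Finset V) :=
    Finset.univ.filter (fun s : Finset V => ∀ u ∈ s, ∀ v ∈ s, ¬ G.Adj u v) with hP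
  rw [← Finset.sum_filter_add_sum_filter_not P (fun s => w ∈ s)]
  have hmem : ∀ s : Finset V, s ∈ P ↔ ∀ u ∈ s, ∀ x ∈ s, ¬ G.Adj u x := by
    intro s; simp [hP]
  -- first sum vanishes via involution s ↦ s Δ {v}
  have h1 : ∑ s ∈ P.filter (fun s => w ∈ s), (-1 : ℤ) ^ s.card = 0 := by
    have hgmem : ∀ s, s ∈ P.filter (fun s => w ∈ s) →
        (if v ∈ s then s.erase v else insert v s) ∈ P.filter (fun s => w ∈ s) := by
      intro s hs
      rcases Finset.mem_filter.mp hs with ⟨hsP, hws⟩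
      have hind := (hmem s).mp hsP
      by_cases hv : v ∈ s
      · simp only [hv, if_true]
        have hi : s.erase v ∈ P := (hmem _).mpr fun u hu x hx =>
          hind u (Finset.mem_of_mem_erase hu) x (Finset.mem_of_mem_erase hx)
        have hw' : w ∈ s.erase v := Finset.mem_erase.mpr ⟨Ne.symm hne, hws⟩
        exact Finset.mem_filter.mpr ⟨hi, hw'⟩
      · simp only [hv, if_false]
        have hi : insert v s ∈ P := by
          refine (hmem _).mpr ?_
          intro u hu x hx hadj
          rcases Finset.mem_insert.mp hu with hu | hu <;>
            rcases Finset.mem_insert.mp hx with hx | hx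
          · rw [hu, hx] at hadj; exact G.irrefl hadj
          · rw [hu] at hadj; exact hind w hws x hx (hsub x hadj)
          · rw [hx] at hadj; exact hind w hws u hu (hsub u hadj.symm)
          · exact hind u hu x hx hadj
        exact Finset.mem_filter.mpr ⟨hi, Finset.mem_insert_of_mem hws⟩
    refine Finset.sum_involution (fun s _ => if v ∈ s then s.erase v else insert v s)
      ?_ ?_ hgmem ?_
    · intro s hs
      by_cases hv : v ∈ s
      · simp only [hv, if_true]
        rw [show s.card = (s.erase v).card + 1 from (Finset.card_erase_add_one hv).symm,
          pow_succ]
        ring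
      · simp only [hv, if_false]
        rw [Finset.card_insert_of_notMem hv, pow_succ]
        ring
    · intro s hs _
      by_cases hv : v ∈ s
      · simp only [hv, if_true]
        intro h
        have := Finset.notMem_erase v s
        rw [h] at this
        exact this hv
      · simp only [hv, if_false]
        intro h
        exact hv (h ▸ Finset.mem_insert_self v s)
    · intro s hs
      by_cases hv : v ∈ s
      · simp [hv, Finset.insert_erase hv]
      · simp [hv, Finset.mem_insert_self, Finset.erase_insert hv]
  rw [h1, zero_add]
  -- second sum: bijection with independent sets of the induced subgraph
  refine Finset.sum_nbij' (i := fun s => s.subtype (· ∈ A))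
    (j := fun t => t.map ⟨Subtype.val, Subtype.val_injective⟩) ?_ ?_ ?_ ?_ ?_
  · intro s hs
    rcases Finset.mem_filter.mp hs with ⟨hsP, hws⟩
    have hind := (hmem s).mp hsP
    simp only [Finset.mem_filter, Finset.mem_univ, true_and]
    intro u hu x hx
    simp only [Finset.mem_subtype] at hu hx
    simpa using hind u.val hu x.val hx
  · intro t ht
    simp only [Finset.mem_filter, Finset.mem_univ, true_and] at ht
    refine Finset.mem_filter.mpr ⟨(hmem _).mpr ?_, ?_⟩
    · intro u hu x hx
      simp only [Finset.mem_map, Function.Embedding.coeFn_mk] at hu hx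
      obtain ⟨u', hu', rfl⟩ := hu
      obtain ⟨x', hx', rfl⟩ := hx
      simpa using ht u' hu' x' hx'
    · simp only [Finset.mem_filter, Finset.mem_map, Function.Embedding.coeFn_mk]
      rintro ⟨⟨x, hx⟩, -, h⟩
      exact hx h
  · intro s hs
    rcases Finset.mem_filter.mp hs with ⟨hsP, hws⟩
    ext x
    simp only [Finset.mem_map, Finset.mem_subtype, Function.Embedding.coeFn_mk]
    constructor
    · rintro ⟨⟨x', hx'⟩, hmem', rfl⟩; exact hmem'
    · intro hx
      have hxA : x ∈ A := by
        simp only [hA, Set.mem_setOf_eq]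
        rintro rfl; exact hws hx
      exact ⟨⟨x, hxA⟩, hx, rfl⟩
  · intro t ht
    ext ⟨x, hx⟩
    simp only [Finset.mem_subtype, Finset.mem_map, Function.Embedding.coeFn_mk]
    constructor
    · rintro ⟨⟨x', hx'⟩, hm, rfl⟩; exact hm
    · intro h; exact ⟨⟨x, hx⟩, h, rfl⟩
  · intro s hs
    rcases Finset.mem_filter.mp hs with ⟨hsP, hws⟩
    congr 1
    rw [Finset.card_subtype]
    congr 1
    refine (Finset.filter_true_of_mem ?_).symm
    intro x hx
    simp only [hA, Set.mem_setOf_eq]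
    rintro rfl; exact hws hx
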